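/- Let Ψ : (0, ∞) → (0, ∞) be an increasing, twice continuously differentiable function such that ∫_1^∞ du/Ψ(u) < ∞, liminf_{x→∞} Ψ'(x) = ∞, and the limit lim_{x→∞} Ψ''(x)Ψ(x)/Ψ'(x)² exists and is positive. Then liminf_{x→∞} Ψ(x) · (∫_x^∞ du/Ψ(u)²) / (∫_x^∞ du/Ψ(u)) > 0. -/

import Mathlib

open Filter MeasureTheory
open scoped Topology

/-- If `Ψ : (0,∞) → (0,∞)` is increasing and twice continuously differentiable with
`∫_1^∞ du/Ψ(u) < ∞`, `liminf_{x→∞} Ψ'(x) = ∞`, and `lim_{x→∞} Ψ''(x)Ψ(x)/Ψ'(x)²`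
exists and is positive, then
`liminf_{x→∞} Ψ(x) · (∫_x^∞ du/Ψ(u)²) / (∫_x^∞ du/Ψ(u)) > 0`. -/
theorem liminf_ratio_integral_inv_sq_pos
    (Ψ : ℝ → ℝ) (hpos : ∀ x > (0 : ℝ), 0 < Ψ x)
    (hmono : StrictMonoOn Ψ (Set.Ioi 0))
    (hsmooth : ContDiffOn ℝ 2 Ψ (Set.Ioi 0))
    (hint : MeasureTheory.IntegrableOn (fun u => 1 / Ψ u) (Set.Ioi 1))
    (hderiv : Tendsto (deriv Ψ) atTop atTop)
    (hsecond : ∃ C : ℝ, 0 < C ∧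
      Tendsto (fun x : ℝ => deriv (deriv Ψ) x * Ψ x / (deriv Ψ x) ^ 2) atTop (𝓝 C)) :
    0 < Filter.liminf (fun x : ℝ =>
        Ψ x * (∫ u in Set.Ioi x, 1 / (Ψ u) ^ 2) / ∫ u in Set.Ioi x, 1 / Ψ u) atTop := by
  obtain ⟨C, hC, hCt⟩ := hsecond
  have hcont : ContinuousOn Ψ (Set.Ioi 0) := hsmooth.continuousOn
  have hΨ1 : 0 < Ψ 1 := hpos 1 one_pos
  have hΨne : ∀ x ∈ Set.Ioi (0:ℝ), Ψ x ≠ 0 := fun x hx => (hpos x hx).ne'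
  have hle : ∀ u : ℝ, 1 < u → Ψ 1 ≤ Ψ u := fun u hu =>
    (hmono (Set.mem_Ioi.2 one_pos) (Set.mem_Ioi.2 (lt_trans one_pos hu)) hu).le
  have hcont1 : ContinuousOn (fun u => 1 / Ψ u) (Set.Ioi 0) := by
    exact (hcont.inv₀ hΨne).congr (fun x _ => by simp [one_div])
  have hcont2 : ContinuousOn (fun u => 1 / Ψ u ^ 2) (Set.Ioi 0) := by
    have : ContinuousOn (fun u => Ψ u ^ 2) (Set.Ioi 0) := hcont.pow 2
    exact (this.inv₀ (fun x hx => pow_ne_zero 2 (hΨne x hx))).congr (fun x _ => by simp [one_div])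
  -- integrability of 1/Ψ² on (1,∞)
  have hint2 : IntegrableOn (fun u => 1 / Ψ u ^ 2) (Set.Ioi 1) := by
    refine Integrable.mono (hint.const_mul (1 / Ψ 1))
      ((hcont2.mono (Set.Ioi_subset_Ioi zero_le_one)).aestronglyMeasurable measurableSet_Ioi) ?_
    refine (ae_restrict_iff' measurableSet_Ioi).2 (ae_of_all _ fun u hu => ?_)
    have hu1 : (1:ℝ) < u := hu
    have h1 : 0 < Ψ u := hpos u (lt_trans one_pos hu1)
    have h2 : Ψ 1 ≤ Ψ u := hle u hu1
    rw [Real.norm_eq_abs, Real.norm_eq_abs, abs_of_nonneg (by positivity),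
      abs_of_nonneg (by positivity)]
    rw [sq, div_mul_div_comm, one_mul]
    rw [show Ψ u * Ψ u = Ψ u ^ 2 by ring] at *
    rw [show (1:ℝ) / Ψ u ^ 2 = 1 / (Ψ u * Ψ u) by rw [sq]]
    exact one_div_le_one_div_of_le (by positivity) (by nlinarith)
  -- decomposition of tail integrals
  have key : ∀ g : ℝ → ℝ, IntegrableOn g (Set.Ioi 1) → ∀ x : ℝ, 1 ≤ x →
      (∫ u in Set.Ioi 1, g u) = (∫ u in (1:ℝ)..x, g u) + ∫ u in Set.Ioi x, g u := by
    intro g hg x hx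
    rw [← Set.Ioc_union_Ioi_eq_Ioi hx,
      MeasureTheory.setIntegral_union (Set.Ioc_disjoint_Ioi le_rfl) measurableSet_Ioi
        (hg.mono_set Set.Ioc_subset_Ioi_self) (hg.mono_set (Set.Ioi_subset_Ioi hx)),
      intervalIntegral.integral_of_le hx]
  -- tail integrals tend to 0
  have hto0 : ∀ g : ℝ → ℝ, IntegrableOn g (Set.Ioi 1) →
      Tendsto (fun x => ∫ u in Set.Ioi x, g u) atTop (𝓝 0) := by
    intro g hg
    have h1 : Tendsto (fun x => ∫ u in (1:ℝ)..x, g u) atTop (𝓝 (∫ u in Set.Ioi 1, g u)) :=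
      MeasureTheory.intervalIntegral_tendsto_integral_Ioi 1 hg tendsto_id
    have h2 : Tendsto (fun x => (∫ u in Set.Ioi 1, g u) - ∫ u in (1:ℝ)..x, g u) atTop (𝓝 0) := by
      simpa using h1.const_sub (∫ u in Set.Ioi 1, g u)
    refine h2.congr' ?_
    filter_upwards [eventually_ge_atTop (1:ℝ)] with x hx
    have := key g hg x hx; linarith
  -- derivative of tail integrals
  have hHD : ∀ g : ℝ → ℝ, IntegrableOn g (Set.Ioi 1) → ContinuousOn g (Set.Ioi 0) →
      ∀ x : ℝ, 1 < x → HasDerivAt (fun y => ∫ u in Set.Ioi y, g u) (-(g x)) x := by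
    intro g hg hgc x hx
    have hx0 : (0:ℝ) < x := lt_trans one_pos hx
    have hii : IntervalIntegrable g volume 1 x := by
      rw [intervalIntegrable_iff_integrableOn_Ioc_of_le hx.le]
      exact hg.mono_set Set.Ioc_subset_Ioi_self
    have hmeas := ContinuousOn.stronglyMeasurableAtFilter (μ := volume) isOpen_Ioi hgc x hx0
    have hca : ContinuousAt g x := hgc.continuousAt (Ioi_mem_nhds hx0)
    have hder := intervalIntegral.integral_hasDerivAt_right hii hmeas hca
    have hd : HasDerivAt (fun y => (∫ u in Set.Ioi 1, g u) - ∫ u in (1:ℝ)..y, g u) (-(g x)) x := by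
      exact ((hasDerivAt_const x (∫ u in Set.Ioi 1, g u)).sub hder).congr_deriv (by simp)
    refine hd.congr_of_eventuallyEq ?_
    filter_upwards [Ioi_mem_nhds hx] with y hy
    have := key g hg y (le_of_lt hy); linarith
  -- positivity of the tail integral of 1/Ψ
  have hI1pos : ∀ x : ℝ, 1 ≤ x → 0 < ∫ u in Set.Ioi x, 1 / Ψ u := by
    intro x hx
    have hi : IntegrableOn (fun u => 1 / Ψ u) (Set.Ioi x) :=
      hint.mono_set (Set.Ioi_subset_Ioi hx)
    rw [setIntegral_pos_iff_support_of_nonneg_ae ?_ hi]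
    · have hsub : Set.Ioi x ⊆ Function.support (fun u => 1 / Ψ u) ∩ Set.Ioi x := by
        intro u hu
        have hu0 : (0:ℝ) < u := lt_of_le_of_lt (zero_le_one.trans hx) hu
        exact ⟨by simp [Function.mem_support, (hpos u hu0).ne'], hu⟩
      calc (0:ENNReal) < volume (Set.Ioi x) := by simp [Real.volume_Ioi]
        _ ≤ _ := measure_mono hsub
    · refine (ae_restrict_iff' measurableSet_Ioi).2 (ae_of_all _ fun u hu => ?_)
      have hu0 : (0:ℝ) < u := lt_of_le_of_lt (zero_le_one.trans hx) hu
      have := hpos u hu0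
      positivity
  -- derivatives of Ψ
  have hd1 : ∀ x ∈ Set.Ioi (0:ℝ), HasDerivAt Ψ (deriv Ψ x) x := fun x hx =>
    ((hsmooth.differentiableOn two_ne_zero x hx).differentiableAt (Ioi_mem_nhds hx)).hasDerivAt
  have hc1 : ContDiffOn ℝ 1 (deriv Ψ) (Set.Ioi 0) :=
    hsmooth.deriv_of_isOpen isOpen_Ioi (by norm_num)
  have hd2 : ∀ x ∈ Set.Ioi (0:ℝ), HasDerivAt (deriv Ψ) (deriv (deriv Ψ) x) x := fun x hx =>
    ((hc1.differentiableOn one_ne_zero x hx).differentiableAt (Ioi_mem_nhds hx)).hasDerivAt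
  -- eventual good region
  have hev : ∀ᶠ x in atTop, 1 < x ∧ 1 ≤ deriv Ψ x ∧
      C / 2 < deriv (deriv Ψ) x * Ψ x / (deriv Ψ x) ^ 2 := by
    filter_upwards [eventually_gt_atTop (1:ℝ), hderiv.eventually_ge_atTop 1,
      hCt.eventually (eventually_gt_nhds (half_lt_self hC))] with x h1 h2 h3
    exact ⟨h1, h2, h3⟩
  -- L'Hôpital 1 : I₁ / (1/Ψ') → 1/C
  have hL1 : Tendsto (fun x => (∫ u in Set.Ioi x, 1 / Ψ u) / (deriv Ψ x)⁻¹) atTop (𝓝 C⁻¹) := by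
    refine HasDerivAt.lhopital_zero_atTop (f' := fun x => -(1 / Ψ x))
      (g' := fun x => -(deriv (deriv Ψ) x) / (deriv Ψ x) ^ 2) ?_ ?_ ?_ ?_ ?_ ?_
    · filter_upwards [eventually_gt_atTop (1:ℝ)] with x hx
      exact hHD _ hint hcont1 x hx
    · filter_upwards [hev] with x ⟨h1, h2, h3⟩
      have hx0 : (0:ℝ) < x := lt_trans one_pos h1
      exact (hd2 x hx0).inv (by linarith : (0:ℝ) < deriv Ψ x).ne'
    · filter_upwards [hev] with x ⟨h1, h2, h3⟩
      have hx0 : (0:ℝ) < x := lt_trans one_pos h1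
      have hΨx : 0 < Ψ x := hpos x hx0
      have hφ : (0:ℝ) < deriv Ψ x := by linarith
      have h2pos : 0 < deriv (deriv Ψ) x := by
        have h0 : 0 < deriv (deriv Ψ) x * Ψ x / (deriv Ψ x) ^ 2 := lt_trans (half_pos hC) h3
        rcases div_pos_iff.mp h0 with ⟨ha, _⟩ | ⟨_, hb⟩
        · nlinarith
        · nlinarith
      have : -(deriv (deriv Ψ) x) / (deriv Ψ x) ^ 2 < 0 :=
        div_neg_of_neg_of_pos (by linarith) (by positivity)
      exact this.ne
    · exact hto0 _ hint
    · exact hderiv.inv_tendsto_atTop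
    · refine Tendsto.congr' ?_ (hCt.inv₀ hC.ne')
      filter_upwards [hev] with x ⟨h1, h2, h3⟩
      have hx0 : (0:ℝ) < x := lt_trans one_pos h1
      have hΨx : 0 < Ψ x := hpos x hx0
      have hφ : (0:ℝ) < deriv Ψ x := by linarith
      have h2pos : 0 < deriv (deriv Ψ) x := by
        have h0 : 0 < deriv (deriv Ψ) x * Ψ x / (deriv Ψ x) ^ 2 := lt_trans (half_pos hC) h3
        rcases div_pos_iff.mp h0 with ⟨ha, _⟩ | ⟨_, hb⟩
        · nlinarith
        · nlinarith
      field_simp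
  -- L'Hôpital 2 : I₂ / (1/(ΨΨ')) → 1/(1+C)
  have hL2 : Tendsto (fun x => (∫ u in Set.Ioi x, 1 / Ψ u ^ 2) / (Ψ x * deriv Ψ x)⁻¹)
      atTop (𝓝 (1 + C)⁻¹) := by
    refine HasDerivAt.lhopital_zero_atTop (f' := fun x => -(1 / Ψ x ^ 2))
      (g' := fun x => -((deriv Ψ x * deriv Ψ x + Ψ x * deriv (deriv Ψ) x) /
        (Ψ x * deriv Ψ x) ^ 2)) ?_ ?_ ?_ ?_ ?_ ?_
    · filter_upwards [eventually_gt_atTop (1:ℝ)] with x hx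
      exact hHD _ hint2 hcont2 x hx
    · filter_upwards [hev] with x ⟨h1, h2, h3⟩
      have hx0 : (0:ℝ) < x := lt_trans one_pos h1
      have hΨx : 0 < Ψ x := hpos x hx0
      have hφ : (0:ℝ) < deriv Ψ x := by linarith
      have := ((hd1 x hx0).mul (hd2 x hx0)).inv
        (by positivity : Ψ x * deriv Ψ x ≠ 0)
      exact this.congr_deriv (by rw [neg_div, Pi.mul_apply])
    · filter_upwards [hev] with x ⟨h1, h2, h3⟩
      have hx0 : (0:ℝ) < x := lt_trans one_pos h1
      have hΨx : 0 < Ψ x := hpos x hx0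
      have hφ : (0:ℝ) < deriv Ψ x := by linarith
      have h2pos : 0 < deriv (deriv Ψ) x := by
        have h0 : 0 < deriv (deriv Ψ) x * Ψ x / (deriv Ψ x) ^ 2 := lt_trans (half_pos hC) h3
        rcases div_pos_iff.mp h0 with ⟨ha, _⟩ | ⟨_, hb⟩
        · nlinarith
        · nlinarith
      exact neg_ne_zero.mpr (div_pos (by nlinarith) (by positivity)).ne'
    · exact hto0 _ hint2
    · -- ΨΨ' → ∞ hence inverse → 0
      have hΨ2 : 0 < Ψ 2 := hpos 2 two_pos
      have htop : Tendsto (fun x => Ψ x * deriv Ψ x) atTop atTop := by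
        refine tendsto_atTop_mono' atTop ?_ (hderiv.const_mul_atTop hΨ2)
        filter_upwards [eventually_ge_atTop (2:ℝ), hderiv.eventually_ge_atTop 0] with x hx hφ
        have hΨx : Ψ 2 ≤ Ψ x := by
          rcases eq_or_lt_of_le hx with h | h
          · rw [← h]
          · exact (hmono (Set.mem_Ioi.2 two_pos) (Set.mem_Ioi.2 (by linarith)) h).le
        nlinarith
      exact htop.inv_tendsto_atTop
    · have hbase : Tendsto (fun x : ℝ => (1 + deriv (deriv Ψ) x * Ψ x / (deriv Ψ x) ^ 2)⁻¹)
          atTop (𝓝 (1 + C)⁻¹) :=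
        (tendsto_const_nhds.add hCt).inv₀ (by positivity)
      refine Tendsto.congr' ?_ hbase
      filter_upwards [hev] with x ⟨h1, h2, h3⟩
      have hx0 : (0:ℝ) < x := lt_trans one_pos h1
      have hΨx : 0 < Ψ x := hpos x hx0
      have hφ : (0:ℝ) < deriv Ψ x := by linarith
      have h2pos : 0 < deriv (deriv Ψ) x := by
        have h0 : 0 < deriv (deriv Ψ) x * Ψ x / (deriv Ψ x) ^ 2 := lt_trans (half_pos hC) h3
        rcases div_pos_iff.mp h0 with ⟨ha, _⟩ | ⟨_, hb⟩
        · nlinarith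
        · nlinarith
      have hsum : deriv Ψ x * deriv Ψ x + Ψ x * deriv (deriv Ψ) x ≠ 0 := by nlinarith
      rw [neg_div_neg_eq]
      field_simp [hΨx.ne', hφ.ne', h2pos.ne', hsum]
  -- combine
  have hfin : Tendsto (fun x : ℝ =>
      ((∫ u in Set.Ioi x, 1 / Ψ u ^ 2) / (Ψ x * deriv Ψ x)⁻¹) /
      ((∫ u in Set.Ioi x, 1 / Ψ u) / (deriv Ψ x)⁻¹)) atTop (𝓝 ((1 + C)⁻¹ / C⁻¹)) :=
    hL2.div hL1 (inv_ne_zero hC.ne')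
  have hmain : Tendsto (fun x : ℝ =>
      Ψ x * (∫ u in Set.Ioi x, 1 / (Ψ u) ^ 2) / ∫ u in Set.Ioi x, 1 / Ψ u)
      atTop (𝓝 ((1 + C)⁻¹ / C⁻¹)) := by
    refine Tendsto.congr' ?_ hfin
    filter_upwards [hev] with x ⟨h1, h2, h3⟩
    have hx0 : (0:ℝ) < x := lt_trans one_pos h1
    have hΨx : 0 < Ψ x := hpos x hx0
    have hφ : (0:ℝ) < deriv Ψ x := by linarith
    have hI1 : 0 < ∫ u in Set.Ioi x, 1 / Ψ u := hI1pos x h1.le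
    field_simp [hΨx.ne', hφ.ne', hI1.ne']
  rw [hmain.liminf_eq]
  positivity
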